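/- Let K be a number field generated by a root θ of a monic irreducible polynomial F(x) ∈ ℤ[x], and let p be a prime such that the number of distinct prime ideals of ℤ_K lying above p with residue degree f exceeds the number of monic irreducible polynomials of degree f in 𝔽_p[x] for some positive integer f. Then for every algebraic integer η with K = ℚ(η), p divides the index (ℤ_K : ℤ[η]); in particular K is not monogenic. -/

import Mathlib

open Polynomial NumberField
open Ideal UniqueFactorizationMonoid


set_option maxHeartbeats 1000000 in
set_option synthInstance.maxHeartbeats 400000 in
theorem aux_key (K : Type*) [Field K] [NumberField K]
    (p : ℕ) (hp : p.Prime) (f : ℕ)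
    (h : Nat.card {g : (ZMod p)[X] // g.Monic ∧ Irreducible g ∧ g.natDegree = f}
        < Nat.card {P : Ideal (𝓞 K) // P.IsMaximal ∧ (p : 𝓞 K) ∈ P ∧
            Ideal.inertiaDeg' (Ideal.span {(p : ℤ)}) P = f})
    (η : 𝓞 K) :
    p ∣ (Algebra.adjoin ℤ {η} : Subalgebra ℤ (𝓞 K)).toSubring.toAddSubgroup.index := by
  classical
  by_contra hpn
  haveI : NeZero p := ⟨hp.ne_zero⟩
  set I : Ideal ℤ := Ideal.span {(p : ℤ)} with hI
  have hpZ : Prime (p : ℤ) := Nat.prime_iff_prime_int.mp hp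
  haveI hImax : I.IsMaximal := PrincipalIdealRing.isMaximal_of_irreducible hpZ.irreducible
  letI : Field (ℤ ⧸ I) := Ideal.Quotient.field I
  have hx' : IsIntegral ℤ η := IsIntegral.of_finite ℤ η
  set n := (Algebra.adjoin ℤ {η} : Subalgebra ℤ (𝓞 K)).toSubring.toAddSubgroup.index with hn
  -- the conductor is coprime to p
  have hsmul : ∀ s : 𝓞 K, (n : 𝓞 K) * s ∈ Algebra.adjoin ℤ {η} := by
    intro s
    have h2 := AddSubgroup.nsmul_index_mem
      (Algebra.adjoin ℤ {η} : Subalgebra ℤ (𝓞 K)).toSubring.toAddSubgroup s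
    rw [nsmul_eq_mul] at h2
    exact h2
  have hmemcond : (n : ℤ) ∈ Ideal.comap (algebraMap ℤ (𝓞 K)) (conductor ℤ η) := by
    rw [Ideal.mem_comap]
    rw [mem_conductor_iff]
    intro b
    simpa using hsmul b
  have hcond : Ideal.comap (algebraMap ℤ (𝓞 K)) (conductor ℤ η) ⊔ I = ⊤ := by
    rw [Ideal.eq_top_iff_one]
    have hcop : IsCoprime (n : ℤ) (p : ℤ) := by
      rw [Int.isCoprime_iff_gcd_eq_one, Int.gcd_natCast_natCast]
      exact Nat.Coprime.symm (hp.coprime_iff_not_dvd.mpr hpn)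
    obtain ⟨a, b, hab⟩ := hcop
    refine Submodule.mem_sup.mpr ⟨a * n, ?_, b * p, ?_, hab⟩
    · exact Ideal.mul_mem_left _ a hmemcond
    · exact Ideal.mul_mem_left _ b (Ideal.subset_span rfl)
  -- the Kummer–Dedekind ring isomorphism
  have hinj : Function.Injective (algebraMap (Algebra.adjoin ℤ ({η} : Set (𝓞 K))) (𝓞 K)) :=
    FaithfulSMul.algebraMap_injective _ _
  set M : (ℤ ⧸ I)[X] := (minpoly ℤ η).map (Ideal.Quotient.mk I) with hM
  set pS : Ideal (𝓞 K) := I.map (algebraMap ℤ (𝓞 K)) with hpS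
  let Φ : 𝓞 K ⧸ pS ≃+* (ℤ ⧸ I)[X] ⧸ Ideal.span {M} :=
    (quotAdjoinEquivQuotMap hcond hinj).symm.trans
      (((Algebra.adjoin.powerBasis' hx').quotientEquivQuotientMinpolyMap I).toRingEquiv.trans
        (Ideal.quotEquivOfEq (by rw [← Algebra.adjoin.powerBasis'_minpoly_gen hx'])))
  -- the map sending a prime above p to a monic irreducible polynomial over ZMod p
  set ψ : (ℤ ⧸ I) ≃+* ZMod p := Int.quotientSpanNatEquivZMod p with hψ
  set NI : Ideal (𝓞 K) → Ideal ((ℤ ⧸ I)[X]) := fun P =>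
    Ideal.comap (Ideal.Quotient.mk (Ideal.span {M}))
      (Ideal.map (Φ : 𝓞 K ⧸ pS →+* (ℤ ⧸ I)[X] ⧸ Ideal.span {M})
        (Ideal.map (Ideal.Quotient.mk pS) P)) with hNI
  set Ψ : Ideal (𝓞 K) → (ZMod p)[X] := fun P =>
    (normalize (Submodule.IsPrincipal.generator (NI P))).map (ψ : (ℤ ⧸ I) →+* ZMod p) with hΨ
  -- main properties
  have main : ∀ P : Ideal (𝓞 K), P.IsMaximal → (p : 𝓞 K) ∈ P →
      Ideal.inertiaDeg' I P = f →
      (Ψ P).Monic ∧ Irreducible (Ψ P) ∧ (Ψ P).natDegree = f := by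
    intro P hPmax hPmem hPdeg
    haveI := hPmax
    have hle : pS ≤ P := by
      rw [hpS, hI, Ideal.map_span]
      refine Ideal.span_le.mpr ?_
      rintro x ⟨y, rfl | _, rfl⟩
      simpa using hPmem
    set P' : Ideal (𝓞 K ⧸ pS) := Ideal.map (Ideal.Quotient.mk pS) P with hP'
    set Q : Ideal ((ℤ ⧸ I)[X] ⧸ Ideal.span {M}) :=
      Ideal.map (Φ : 𝓞 K ⧸ pS →+* (ℤ ⧸ I)[X] ⧸ Ideal.span {M}) P' with hQ
    set N : Ideal ((ℤ ⧸ I)[X]) := NI P with hN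
    have hQN : Q = Ideal.map (Ideal.Quotient.mk (Ideal.span {M})) N :=
      (Ideal.map_comap_of_surjective _ Ideal.Quotient.mk_surjective Q).symm
    have hkerle : Ideal.span {M} ≤ N := by
      intro x hx
      have hx0 : Ideal.Quotient.mk (Ideal.span {M}) x = 0 :=
        Ideal.Quotient.eq_zero_iff_mem.mpr hx
      show Ideal.Quotient.mk (Ideal.span {M}) x ∈
        Ideal.map (Φ : 𝓞 K ⧸ pS →+* (ℤ ⧸ I)[X] ⧸ Ideal.span {M})
          (Ideal.map (Ideal.Quotient.mk pS) P)
      rw [hx0]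
      exact Submodule.zero_mem _
    -- ring isomorphism 𝓞 K ⧸ P ≃ 𝔽[X] ⧸ N
    let e : (𝓞 K ⧸ P) ≃+* (ℤ ⧸ I)[X] ⧸ N :=
      (DoubleQuot.quotQuotEquivQuotOfLE hle).symm.trans
        ((Ideal.quotientEquiv P' Q Φ rfl).trans
          ((Ideal.quotEquivOfEq hQN).trans (DoubleQuot.quotQuotEquivQuotOfLE hkerle)))
    haveI : P.IsMaximal := hPmax
    letI : Field (𝓞 K ⧸ P) := Ideal.Quotient.field P
    have hNmax : N.IsMaximal :=
      Ideal.Quotient.maximal_of_isField _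
        (MulEquiv.isField (Field.toIsField (𝓞 K ⧸ P)) e.symm.toMulEquiv)
    have hNbot : N ≠ ⊥ :=
      Ring.ne_bot_of_isMaximal_of_not_isField hNmax (Polynomial.not_isField _)
    haveI : N.IsPrime := hNmax.isPrime
    have hgenprime : Prime (Submodule.IsPrincipal.generator N) :=
      Submodule.IsPrincipal.prime_generator_of_isPrime N hNbot
    set g : (ℤ ⧸ I)[X] := normalize (Submodule.IsPrincipal.generator N) with hg
    have hgirr : Irreducible g :=
      (normalize_associated _).symm.irreducible hgenprime.irreducible
    have hgmonic : g.Monic := Polynomial.monic_normalize hgenprime.ne_zero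
    have hspan : Ideal.span {g} = N := by
      rw [hg, Ideal.span_singleton_eq_span_singleton.mpr (normalize_associated _),
        Ideal.span_singleton_generator]
    -- degree computation via cardinalities
    have hPbot : P ≠ ⊥ := by
      intro h0
      have : (p : 𝓞 K) = 0 := by simpa [h0] using hPmem
      exact hp.ne_zero (by exact_mod_cast (by simpa using this : ((p:ℕ) : 𝓞 K) = 0))
    haveI : Fintype (𝓞 K ⧸ P) := @Fintype.ofFinite _ (Ideal.finiteQuotientOfFreeOfNeBot P hPbot)
    haveI : Finite (𝓞 K ⧸ P) := Finite.of_fintype _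
    haveI : Finite (ℤ ⧸ I) := Finite.of_equiv _ ψ.symm.toEquiv
    have hcardF : Nat.card (ℤ ⧸ I) = p := by
      rw [Nat.card_congr ψ.toEquiv, Nat.card_zmod]
    have hcomapP : Ideal.comap (algebraMap ℤ (𝓞 K)) P = I := by
      refine (hImax.eq_of_le ?_ ?_).symm
      · intro htop
        have h1 : (1 : ℤ) ∈ Ideal.comap (algebraMap ℤ (𝓞 K)) P := htop.symm ▸ Submodule.mem_top
        exact hPmax.ne_top ((Ideal.eq_top_iff_one P).mpr (by simpa using h1))
      · intro x hx
        rw [Ideal.mem_comap]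
        rw [hI, Ideal.mem_span_singleton] at hx
        obtain ⟨c, rfl⟩ := hx
        simpa using Ideal.mul_mem_right (algebraMap ℤ (𝓞 K) c) P hPmem
    letI alg : Algebra (ℤ ⧸ I) (𝓞 K ⧸ P) :=
      Ideal.Quotient.algebraQuotientOfLEComap (le_of_eq hcomapP.symm)
    have hD : Ideal.inertiaDeg' I P = Module.finrank (ℤ ⧸ I) (𝓞 K ⧸ P) := by
      rw [Ideal.inertiaDeg', dif_pos hcomapP]
    have hcard1 : Nat.card (𝓞 K ⧸ P) = p ^ f := by
      cases nonempty_fintype (ℤ ⧸ I)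
      rw [Nat.card_eq_fintype_card, Module.card_eq_pow_finrank (K := ℤ ⧸ I) (V := 𝓞 K ⧸ P),
        ← hD, hPdeg, ← Nat.card_eq_fintype_card, hcardF]
    have hgne : g ≠ 0 := hgmonic.ne_zero
    haveI : Finite ((ℤ ⧸ I)[X] ⧸ N) := Finite.of_equiv _ e.toEquiv
    haveI : Finite (AdjoinRoot g) := by
      show Finite ((ℤ ⧸ I)[X] ⧸ Ideal.span {g})
      rw [hspan]
      exact inferInstance
    have hcard2 : Nat.card ((ℤ ⧸ I)[X] ⧸ N) = p ^ g.natDegree := by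
      have h1 : Nat.card ((ℤ ⧸ I)[X] ⧸ N) = Nat.card (AdjoinRoot g) := by
        rw [← hspan]; rfl
      cases nonempty_fintype (ℤ ⧸ I)
      cases nonempty_fintype (AdjoinRoot g)
      rw [h1, Nat.card_eq_fintype_card, Module.card_eq_pow_finrank (K := ℤ ⧸ I) (V := AdjoinRoot g),
        (AdjoinRoot.powerBasis hgne).finrank, AdjoinRoot.powerBasis_dim,
        ← Nat.card_eq_fintype_card, hcardF]
    have hdeg : g.natDegree = f := by
      have : p ^ f = p ^ g.natDegree := by
        rw [← hcard1, Nat.card_congr e.toEquiv, hcard2]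
      exact (Nat.pow_right_injective hp.two_le this).symm
    refine ⟨hgmonic.map _, ?_, ?_⟩
    · have : Ψ P = Polynomial.mapEquiv ψ g := rfl
      rw [this]
      exact (MulEquiv.irreducible_iff (Polynomial.mapEquiv ψ)).mpr hgirr
    · show (g.map (ψ : (ℤ ⧸ I) →+* ZMod p)).natDegree = f
      rw [natDegree_map_eq_of_injective ψ.injective, hdeg]
  -- injectivity
  have hinj2 : ∀ P₁ P₂ : Ideal (𝓞 K), pS ≤ P₁ → pS ≤ P₂ → Ψ P₁ = Ψ P₂ → P₁ = P₂ := by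
    intro P₁ P₂ h₁ h₂ hΨeq
    have hg : normalize (Submodule.IsPrincipal.generator (NI P₁)) =
        normalize (Submodule.IsPrincipal.generator (NI P₂)) :=
      Polynomial.map_injective _ ψ.injective hΨeq
    have hNeq : NI P₁ = NI P₂ := by
      rw [← Ideal.span_singleton_generator (NI P₁), ← Ideal.span_singleton_generator (NI P₂),
        Ideal.span_singleton_eq_span_singleton]
      exact ((normalize_associated _).symm.trans (hg ▸ normalize_associated _))
    have hQeq : Ideal.map (Φ : 𝓞 K ⧸ pS →+* (ℤ ⧸ I)[X] ⧸ Ideal.span {M}) (Ideal.map (Ideal.Quotient.mk pS) P₁)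
        = Ideal.map (Φ : 𝓞 K ⧸ pS →+* (ℤ ⧸ I)[X] ⧸ Ideal.span {M}) (Ideal.map (Ideal.Quotient.mk pS) P₂) := by
      have e1 := Ideal.map_comap_of_surjective (Ideal.Quotient.mk (Ideal.span {M}))
        Ideal.Quotient.mk_surjective
        (Ideal.map (Φ : 𝓞 K ⧸ pS →+* (ℤ ⧸ I)[X] ⧸ Ideal.span {M}) (Ideal.map (Ideal.Quotient.mk pS) P₁))
      have e2 := Ideal.map_comap_of_surjective (Ideal.Quotient.mk (Ideal.span {M}))
        Ideal.Quotient.mk_surjective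
        (Ideal.map (Φ : 𝓞 K ⧸ pS →+* (ℤ ⧸ I)[X] ⧸ Ideal.span {M}) (Ideal.map (Ideal.Quotient.mk pS) P₂))
      rw [← e1, ← e2]
      exact congrArg _ hNeq
    have hPeq' : Ideal.map (Ideal.Quotient.mk pS) P₁ = Ideal.map (Ideal.Quotient.mk pS) P₂ := by
      have c1 := Ideal.comap_map_of_bijective
        (Φ : 𝓞 K ⧸ pS →+* (ℤ ⧸ I)[X] ⧸ Ideal.span {M}) Φ.bijective
        (I := Ideal.map (Ideal.Quotient.mk pS) P₁)
      have c2 := Ideal.comap_map_of_bijective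
        (Φ : 𝓞 K ⧸ pS →+* (ℤ ⧸ I)[X] ⧸ Ideal.span {M}) Φ.bijective
        (I := Ideal.map (Ideal.Quotient.mk pS) P₂)
      rw [← c1, ← c2, hQeq]
    have recov : ∀ P : Ideal (𝓞 K), pS ≤ P →
        Ideal.comap (Ideal.Quotient.mk pS) (Ideal.map (Ideal.Quotient.mk pS) P) = P := by
      intro P hle
      rw [Ideal.comap_map_of_surjective _ Ideal.Quotient.mk_surjective]
      have : Ideal.comap (Ideal.Quotient.mk pS) ⊥ = pS := by
        ext x; simp [Ideal.mem_comap, Ideal.Quotient.eq_zero_iff_mem]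
      rw [this, sup_eq_left.mpr hle]
    rw [← recov P₁ h₁, ← recov P₂ h₂, hPeq']
  -- conclude
  have hle' : ∀ P : Ideal (𝓞 K), (p : 𝓞 K) ∈ P → pS ≤ P := by
    intro P hPmem
    rw [hpS, hI, Ideal.map_span]
    refine Ideal.span_le.mpr ?_
    rintro x ⟨y, rfl | _, rfl⟩
    simpa using hPmem
  haveI : NeZero p := ⟨hp.ne_zero⟩
  haveI : Finite {g : (ZMod p)[X] // g.Monic ∧ Irreducible g ∧ g.natDegree = f} := by
    refine Finite.of_injective (fun g => (fun i : Fin (f + 1) => g.1.coeff i)) ?_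
    rintro ⟨g₁, hg₁⟩ ⟨g₂, hg₂⟩ hgg
    ext1
    ext m
    by_cases hm : m ≤ f
    · have := congrFun hgg ⟨m, Nat.lt_succ_of_le hm⟩
      simpa using this
    · push_neg at hm
      rw [Polynomial.coeff_eq_zero_of_natDegree_lt (by rw [hg₁.2.2]; exact hm),
        Polynomial.coeff_eq_zero_of_natDegree_lt (by rw [hg₂.2.2]; exact hm)]
  have hcardle : Nat.card {P : Ideal (𝓞 K) // P.IsMaximal ∧ (p : 𝓞 K) ∈ P ∧
      Ideal.inertiaDeg' I P = f}
      ≤ Nat.card {g : (ZMod p)[X] // g.Monic ∧ Irreducible g ∧ g.natDegree = f} := by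
    refine Nat.card_le_card_of_injective
      (fun P => ⟨Ψ P.1, main P.1 P.2.1 P.2.2.1 P.2.2.2⟩) ?_
    rintro ⟨P₁, h₁⟩ ⟨P₂, h₂⟩ hPP
    ext1
    exact hinj2 P₁ P₂ (hle' P₁ h₁.2.1) (hle' P₂ h₂.2.1) (congrArg Subtype.val hPP)
  exact absurd h (not_lt.mpr hcardle)

/-- If the number of distinct prime ideals of `ℤ_K` above `p` with residue degree `f`
exceeds the number of monic irreducible polynomials of degree `f` over `𝔽_p`, then `p`
divides the index `(ℤ_K : ℤ[η])` for every generator `η`; in particular `K` is not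
monogenic. -/
theorem common_index_divisor_of_many_primes (K : Type*) [Field K] [NumberField K]
    (F : ℤ[X]) (hFmonic : F.Monic) (hFirr : Irreducible F)
    (θ : K) (hθ : Polynomial.aeval θ F = 0) (hgen : Algebra.adjoin ℚ {θ} = ⊤)
    (p : ℕ) (hp : p.Prime) (f : ℕ) (hf : 0 < f)
    (h : Nat.card {g : (ZMod p)[X] // g.Monic ∧ Irreducible g ∧ g.natDegree = f}
        < Nat.card {P : Ideal (𝓞 K) // P.IsMaximal ∧ (p : 𝓞 K) ∈ P ∧
            Ideal.inertiaDeg' (Ideal.span {(p : ℤ)}) P = f}) :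
    (∀ η : 𝓞 K, Algebra.adjoin ℚ {(η : K)} = ⊤ →
        p ∣ (Algebra.adjoin ℤ {η} : Subalgebra ℤ (𝓞 K)).toSubring.toAddSubgroup.index) ∧
    ¬ ∃ η : 𝓞 K, Algebra.adjoin ℤ {η} = ⊤ := by
  constructor
  · intro η _
    exact aux_key K p hp f h η
  · rintro ⟨η, hη⟩
    have hdvd := aux_key K p hp f h η
    rw [hη] at hdvd
    have htop : (⊤ : Subalgebra ℤ (𝓞 K)).toSubring.toAddSubgroup = ⊤ := by
      ext x; simp
    rw [htop, AddSubgroup.index_top] at hdvd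
    exact hp.one_lt.ne' (Nat.dvd_one.mp hdvd)
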